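/- R₄ is an integral domain, and for all a,b ∈ K with a³ = b³ = −1 and i < j in {2,3,4}, the tensor products Coker φ_ij(a,b) ⊗_{R₄} Frac(R₄) and Coker ψ_ij(a,b) ⊗_{R₄} Frac(R₄) are one-dimensional vector spaces over the fraction field Frac(R₄); that is, the modules Coker φ_ij(a,b) and Coker ψ_ij(a,b) all have rank one. -/

import Mathlib

open MvPolynomial Matrix TensorProduct

set_option maxHeartbeats 1000000
set_option synthInstance.maxHeartbeats 400000

noncomputable section

/-- The polynomial ring `S = K[Y₁,Y₂,Y₃,Y₄]`. -/
abbrev S (K : Type) [Field K] := MvPolynomial (Fin 4) K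

/-- The variables `Y₁,…,Y₄` (indexed by `1,…,4`). -/
def Yv (K : Type) [Field K] : ℕ → S K
  | 1 => X 0
  | 2 => X 1
  | 3 => X 2
  | 4 => X 3
  | _ => 0

/-- `f₄ = Y₁³+Y₂³+Y₃³+Y₄³`. -/
def f4 (K : Type) [Field K] : S K :=
  Yv K 1 ^ 3 + Yv K 2 ^ 3 + Yv K 3 ^ 3 + Yv K 4 ^ 3

/-- The hypersurface ring `R₄ = S/(f₄)`. -/
abbrev R4 (K : Type) [Field K] := S K ⧸ Ideal.span {f4 K}

/-- The canonical projection `S → R₄`. -/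
abbrev proj (K : Type) [Field K] : S K →+* R4 K := Ideal.Quotient.mk (Ideal.span {f4 K})

/-- The `R₄`-linear map `R₄ⁿ → R₄ⁿ` induced by an `n × n` matrix over `S`. -/
abbrev mbar (K : Type) [Field K] {n : ℕ} (M : Matrix (Fin n) (Fin n) (S K)) :
    (Fin n → R4 K) →ₗ[R4 K] (Fin n → R4 K) :=
  Matrix.mulVecLin (M.map ⇑(proj K))

/-- The cokernel of the `R₄`-linear map induced by a matrix over `S`. -/
abbrev coker (K : Type) [Field K] {n : ℕ} (M : Matrix (Fin n) (Fin n) (S K)) :=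
  (Fin n → R4 K) ⧸ LinearMap.range (mbar K M)

/-- The matrix `φ_ij(a,b)`. -/
def phiM (K : Type) [Field K] (a b : K) (i j s : ℕ) : Matrix (Fin 2) (Fin 2) (S K) :=
  !![Yv K 1 - C a * Yv K s, -(Yv K i ^ 2 + C b * Yv K i * Yv K j + C b ^ 2 * Yv K j ^ 2);
     Yv K i - C b * Yv K j, Yv K 1 ^ 2 + C a * Yv K 1 * Yv K s + C a ^ 2 * Yv K s ^ 2]

/-- The matrix `ψ_ij(a,b)`. -/
def psiM (K : Type) [Field K] (a b : K) (i j s : ℕ) : Matrix (Fin 2) (Fin 2) (S K) :=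
  !![Yv K 1 ^ 2 + C a * Yv K 1 * Yv K s + C a ^ 2 * Yv K s ^ 2,
       Yv K i ^ 2 + C b * Yv K i * Yv K j + C b ^ 2 * Yv K j ^ 2;
     -(Yv K i - C b * Yv K j), Yv K 1 - C a * Yv K s]

/-- The set `𝓛_i` of linear forms `Y_i - a Y_j` with `a³ = -1` and `i < j ≤ 4`. -/
def Lset (K : Type) [Field K] (i : ℕ) : Set (S K) :=
  {p | ∃ (a : K) (j : ℕ), a ^ 3 = -1 ∧ i < j ∧ j ≤ 4 ∧ p = Yv K i - C a * Yv K j}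

/-- The matrix `α(b,c,d,ε)`, where `a = ε²bcd`. -/
def alphaM (K : Type) [Field K] (b c d ε : K) : Matrix (Fin 3) (Fin 3) (S K) :=
  let a := ε ^ 2 * b * c * d
  !![0, Yv K 1 - C a * Yv K 4, Yv K 2 - C b * Yv K 3;
     Yv K 1 - C c * Yv K 2, -(C (b ^ 2) * Yv K 3) - C (a * b * c ^ 2 * ε ^ 2) * Yv K 4,
       C (b ^ 2 * c ^ 2) * Yv K 3 - C (a * b * c * ε ^ 2) * Yv K 4;
     Yv K 3 - C d * Yv K 4, C (c ^ 2) * Yv K 2 + C (b * c ^ 2) * Yv K 3 + C (a * c) * Yv K 4,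
       -(Yv K 1) - C c * Yv K 2 - C a * Yv K 4]

/-- The matrix `β(b,c,d,ε)`, the transpose of `α(b,c,d,ε)`. -/
def betaM (K : Type) [Field K] (b c d ε : K) : Matrix (Fin 3) (Fin 3) (S K) :=
  (alphaM K b c d ε).transpose

/-- The matrix `η(a,b,c,ε)`. -/
def etaM (K : Type) [Field K] (a b c ε : K) : Matrix (Fin 3) (Fin 3) (S K) :=
  !![0, Yv K 1 + Yv K 2, Yv K 3 - C a * Yv K 4;
     Yv K 1 + C ε * Yv K 2, -(Yv K 3) + C c * Yv K 4, 0;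
     Yv K 3 - C b * Yv K 4, 0, -(Yv K 1) - C (ε ^ 2) * Yv K 2]

/-- The matrix `θ(a,b,c)` (denoted `ϑ(a,b,c)` in the paper). -/
def thetaM (K : Type) [Field K] (a b c : K) : Matrix (Fin 3) (Fin 3) (S K) :=
  !![0, Yv K 1 + Yv K 3, Yv K 2 - C a * Yv K 4;
     Yv K 1 - C (a ^ 2 * b) * Yv K 3, -(Yv K 2) + C c * Yv K 4, 0;
     Yv K 2 - C b * Yv K 4, 0, -(Yv K 1) + C (a * b ^ 2) * Yv K 3]

/-- The matrix `D((a,b,c),(p,q,r))`. -/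
def DM (K : Type) [Field K] (a b c p q r : K) : Matrix (Fin 3) (Fin 3) (S K) :=
  !![0, Yv K 1 - C a * Yv K 2, Yv K 3 - C p * Yv K 4;
     Yv K 1 - C c * Yv K 2, -(Yv K 3) + C r * Yv K 4, 0;
     Yv K 3 - C q * Yv K 4, 0, -(Yv K 1) + C b * Yv K 2]

/-- `(a,b,c)` is a permutation (i.e. an enumeration) of the three cube roots of `-1` in `K`. -/
def cubePerm (K : Type) [Field K] (a b c : K) : Prop :=
  a ^ 3 = -1 ∧ b ^ 3 = -1 ∧ c ^ 3 = -1 ∧ a ≠ b ∧ a ≠ c ∧ b ≠ c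


lemma prime_X01 (K : Type) [Field K] : Prime (X 0 + X 1 : MvPolynomial (Fin 2) K) := by
  rw [← MulEquiv.prime_iff (MvPolynomial.finSuccEquiv K 1).toRingEquiv.toMulEquiv]
  have h1 : (X 1 : MvPolynomial (Fin 2) K) = X (Fin.succ 0) := rfl
  have h : (MvPolynomial.finSuccEquiv K 1) (X 0 + X 1)
      = Polynomial.X - Polynomial.C (-(X 0)) := by
    rw [map_add, finSuccEquiv_X_zero, h1, finSuccEquiv_X_succ, map_neg, sub_neg_eq_add]
  show Prime ((MvPolynomial.finSuccEquiv K 1) (X 0 + X 1))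
  rw [h]
  exact Polynomial.prime_X_sub_C _

lemma eisen {A : Type*} [CommRing A] [IsDomain A] (p c : A) (hp : Prime p) (hpc : p ∣ c)
    (hp2 : ¬ p ^ 2 ∣ c) : Irreducible (Polynomial.X ^ 3 + Polynomial.C c) := by
  have hdeg : (Polynomial.X ^ 3 + Polynomial.C c : Polynomial A).degree = 3 :=
    Polynomial.degree_X_pow_add_C (by norm_num) c
  apply Polynomial.irreducible_of_eisenstein_criterion (P := Ideal.span {p})
  · exact (Ideal.span_singleton_prime hp.ne_zero).mpr hp
  · rw [(Polynomial.monic_X_pow_add_C c (n := 3) (by norm_num)).leadingCoeff,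
      Ideal.mem_span_singleton]
    exact fun h => hp.not_unit (isUnit_of_dvd_one h)
  · intro n hn
    rw [hdeg] at hn
    have hn3 : n < 3 := by exact_mod_cast hn
    interval_cases n <;>
      simp [Polynomial.coeff_X_pow, Ideal.mem_span_singleton, hpc]
  · rw [hdeg]; norm_num
  · rw [Ideal.span_singleton_pow, Ideal.mem_span_singleton]
    simpa [Polynomial.coeff_X_pow] using hp2
  · exact (Polynomial.monic_X_pow_add_C c (by norm_num)).isPrimitive

lemma irr_c3 (K : Type) [Field K] [CharZero K] : Irreducible (X 0 ^ 3 + X 1 ^ 3 + X 2 ^ 3 : MvPolynomial (Fin 3) K) := by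
  rw [← MulEquiv.irreducible_iff (MvPolynomial.finSuccEquiv K 2).toRingEquiv.toMulEquiv]
  show Irreducible ((MvPolynomial.finSuccEquiv K 2) (X 0 ^ 3 + X 1 ^ 3 + X 2 ^ 3))
  have h1 : (X 1 : MvPolynomial (Fin 3) K) = X (Fin.succ 0) := rfl
  have h2 : (X 2 : MvPolynomial (Fin 3) K) = X (Fin.succ 1) := rfl
  have h : (MvPolynomial.finSuccEquiv K 2) (X 0 ^ 3 + X 1 ^ 3 + X 2 ^ 3)
      = Polynomial.X ^ 3 + Polynomial.C (X 0 ^ 3 + X 1 ^ 3) := by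
    simp [map_add, map_pow, finSuccEquiv_X_zero, h1, h2, finSuccEquiv_X_succ, add_assoc]
  rw [h]
  apply eisen (X 0 + X 1) _ (prime_X01 K)
  · exact ⟨X 0 ^ 2 - X 0 * X 1 + X 1 ^ 2, by ring⟩
  · rintro ⟨t, ht⟩
    have h' : (X 0 + X 1) * (X 0 ^ 2 - X 0 * X 1 + X 1 ^ 2)
        = (X 0 + X 1) * ((X 0 + X 1) * t) := by linear_combination ht
    have h'' := mul_left_cancel₀ (prime_X01 K).ne_zero h'
    have := congrArg (eval ![(1 : K), -1]) h''
    simp at this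
    norm_num at this

lemma prime_c3 (K : Type) [Field K] [CharZero K] : Prime (X 0 ^ 3 + X 1 ^ 3 + X 2 ^ 3 : MvPolynomial (Fin 3) K) :=
  (UniqueFactorizationMonoid.irreducible_iff_prime.mp (irr_c3 K))

lemma prime_f4 (K : Type) [Field K] [CharZero K] : Prime (f4 K) := by
  rw [show f4 K = X 0 ^ 3 + X 1 ^ 3 + X 2 ^ 3 + X 3 ^ 3 from rfl]
  apply UniqueFactorizationMonoid.irreducible_iff_prime.mp
  rw [← MulEquiv.irreducible_iff (MvPolynomial.finSuccEquiv K 3).toRingEquiv.toMulEquiv]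
  show Irreducible ((MvPolynomial.finSuccEquiv K 3) (X 0 ^ 3 + X 1 ^ 3 + X 2 ^ 3 + X 3 ^ 3))
  have h1 : (X 1 : MvPolynomial (Fin 4) K) = X (Fin.succ 0) := rfl
  have h2 : (X 2 : MvPolynomial (Fin 4) K) = X (Fin.succ 1) := rfl
  have h3 : (X 3 : MvPolynomial (Fin 4) K) = X (Fin.succ 2) := rfl
  have h : (MvPolynomial.finSuccEquiv K 3) (X 0 ^ 3 + X 1 ^ 3 + X 2 ^ 3 + X 3 ^ 3)
      = Polynomial.X ^ 3 + Polynomial.C (X 0 ^ 3 + X 1 ^ 3 + X 2 ^ 3) := by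
    simp [map_add, map_pow, finSuccEquiv_X_zero, h1, h2, h3, finSuccEquiv_X_succ, add_assoc]
  rw [h]
  apply eisen _ _ (prime_c3 K) dvd_rfl
  rintro ⟨t, ht⟩
  have h' : (X 0 ^ 3 + X 1 ^ 3 + X 2 ^ 3 : MvPolynomial (Fin 3) K) * 1
      = (X 0 ^ 3 + X 1 ^ 3 + X 2 ^ 3) * ((X 0 ^ 3 + X 1 ^ 3 + X 2 ^ 3) * t) := by
    linear_combination ht
  exact (prime_c3 K).not_isUnit
    (IsUnit.of_mul_eq_one _ (mul_left_cancel₀ (prime_c3 K).ne_zero h').symm)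

lemma r4_domain (K : Type) [Field K] [CharZero K] : IsDomain (R4 K) := by
  haveI : (Ideal.span {f4 K}).IsPrime :=
    (Ideal.span_singleton_prime (prime_f4 K).ne_zero).mpr (prime_f4 K)
  exact Ideal.Quotient.isDomain _

lemma rank_coker_generic (R : Type) [CommRing R] [IsDomain R] (A : Matrix (Fin 2) (Fin 2) R)
    (hdetA : A.det = 0) (k l : Fin 2) (hne : A k l ≠ 0) :
    Module.rank (FractionRing R)
      (FractionRing R ⊗[R] ((Fin 2 → R) ⧸ LinearMap.range A.mulVecLin)) = 1 := by
  classical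
  set F := FractionRing R
  set A' : Matrix (Fin 2) (Fin 2) F := A.map ⇑(algebraMap R F) with hA'
  have hdetA' : A'.det = 0 := by
    rw [hA', ← RingHom.mapMatrix_apply, ← RingHom.map_det, hdetA, map_zero]
  have hneA' : A' k l ≠ 0 := by
    simp only [hA', Matrix.map_apply]
    rw [Ne, IsFractionRing.to_map_eq_zero_iff]
    exact hne
  set f : (Fin 2 → R) →ₗ[R] (Fin 2 → R) := A.mulVecLin with hf
  have hex : Function.Exact f (LinearMap.range f).mkQ :=
    LinearMap.exact_iff.mpr (Submodule.ker_mkQ _)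
  have hsurj : Function.Surjective (LinearMap.range f).mkQ := Submodule.mkQ_surjective _
  have hex2 : Function.Exact (f.baseChange F) ((LinearMap.range f).mkQ.baseChange F) := by
    have h := lTensor_exact F hex hsurj
    rwa [← LinearMap.baseChange_eq_ltensor, ← LinearMap.baseChange_eq_ltensor] at h
  have hsurj2 : Function.Surjective ((LinearMap.range f).mkQ.baseChange F) := by
    have h := LinearMap.lTensor_surjective F hsurj
    rwa [← LinearMap.baseChange_eq_ltensor] at h
  have hker2 : LinearMap.ker ((LinearMap.range f).mkQ.baseChange F)
      = LinearMap.range (f.baseChange F) := LinearMap.exact_iff.mp hex2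
  set e := TensorProduct.piScalarRight R F F (Fin 2) with he
  have hcomm : ∀ x, e ((f.baseChange F) x) = (Matrix.mulVecLin A') (e x) := by
    intro x
    induction x using TensorProduct.induction_on with
    | zero => simp
    | add x y hx hy => simp only [map_add, hx, hy]
    | tmul c v =>
      rw [LinearMap.baseChange_tmul]
      simp only [he, TensorProduct.piScalarRight_apply, TensorProduct.piScalarRightHom_tmul]
      funext jj
      simp only [Matrix.mulVecLin_apply, Matrix.mulVec, dotProduct, hf,
        Matrix.map_apply, hA']
      rw [Finset.sum_smul]
      apply Finset.sum_congr rfl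
      intro m _
      rw [Algebra.smul_def, Algebra.smul_def, _root_.map_mul, mul_assoc]
  have hrange : Submodule.map (e : F ⊗[R] (Fin 2 → R) →ₗ[F] (Fin 2 → F))
      (LinearMap.range (f.baseChange F)) = LinearMap.range (Matrix.mulVecLin A') := by
    have h1 : Submodule.map e.toLinearMap (LinearMap.range (f.baseChange F))
        = LinearMap.range (e.toLinearMap ∘ₗ f.baseChange F) := (LinearMap.range_comp _ _).symm
    have h2 : e.toLinearMap ∘ₗ f.baseChange F
        = (Matrix.mulVecLin A') ∘ₗ e.toLinearMap := LinearMap.ext hcomm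
    rw [show Submodule.map (e : F ⊗[R] (Fin 2 → R) →ₗ[F] (Fin 2 → F))
        (LinearMap.range (f.baseChange F))
      = Submodule.map e.toLinearMap (LinearMap.range (f.baseChange F)) from rfl, h1, h2,
      LinearMap.range_comp, LinearEquiv.range, Submodule.map_top]
  let q1 : ((F ⊗[R] (Fin 2 → R)) ⧸ LinearMap.ker ((LinearMap.range f).mkQ.baseChange F))
      ≃ₗ[F] F ⊗[R] ((Fin 2 → R) ⧸ LinearMap.range f) :=
    LinearMap.quotKerEquivOfSurjective _ hsurj2
  let q0 := Submodule.quotEquivOfEq _ _ hker2.symm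
  let q2 := Submodule.Quotient.equiv (LinearMap.range (f.baseChange F))
      (LinearMap.range (Matrix.mulVecLin A')) e hrange
  have hrk : Module.rank F (F ⊗[R] ((Fin 2 → R) ⧸ LinearMap.range f))
      = Module.rank F ((Fin 2 → F) ⧸ LinearMap.range (Matrix.mulVecLin A')) :=
    (((q0.trans q1).symm.trans q2)).rank_eq
  rw [hrk]
  obtain ⟨v, hv0, hveq⟩ := (Matrix.exists_mulVec_eq_zero_iff).mpr hdetA'
  have hk : LinearMap.ker (Matrix.mulVecLin A') ≠ ⊥ := by
    intro hbot
    apply hv0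
    have hv : v ∈ LinearMap.ker (Matrix.mulVecLin A') := LinearMap.mem_ker.mpr hveq
    rw [hbot, Submodule.mem_bot] at hv
    exact hv
  have hr : LinearMap.range (Matrix.mulVecLin A') ≠ ⊥ := by
    intro hbot
    have hz := LinearMap.range_eq_bot.mp hbot
    have h0 : (Matrix.mulVecLin A') (Pi.single l 1) k = 0 := by rw [hz]; rfl
    rw [Matrix.mulVecLin_apply, Matrix.mulVec_single] at h0
    change A' k l * 1 = 0 at h0
    simp only [mul_one] at h0
    exact hneA' h0
  have hfr := LinearMap.finrank_range_add_finrank_ker (Matrix.mulVecLin A')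
  have h2 : Module.finrank F (Fin 2 → F) = 2 := by simp
  have hkf : Module.finrank F (LinearMap.ker (Matrix.mulVecLin A')) ≠ 0 := by
    rw [Ne, Submodule.finrank_eq_zero]; exact hk
  have hrf : Module.finrank F (LinearMap.range (Matrix.mulVecLin A')) ≠ 0 := by
    rw [Ne, Submodule.finrank_eq_zero]; exact hr
  have hq := Submodule.finrank_quotient_add_finrank (LinearMap.range (Matrix.mulVecLin A'))
  have hone : Module.finrank F ((Fin 2 → F) ⧸ LinearMap.range (Matrix.mulVecLin A')) = 1 := by
    omega
  rw [← Module.finrank_eq_rank, hone, Nat.cast_one]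

lemma rank_coker_aux (K : Type) [Field K] [IsDomain (R4 K)] (M : Matrix (Fin 2) (Fin 2) (S K))
    (hdet : M.det = f4 K) (k l : Fin 2) (v : Fin 4 → K) (hv : eval v (f4 K) = 0)
    (hp : eval v (M k l) ≠ 0) :
    Module.rank (FractionRing (R4 K)) (FractionRing (R4 K) ⊗[R4 K] coker K M) = 1 := by
  have hdet0 : ((M.map ⇑(proj K))).det = 0 := by
    rw [← RingHom.mapMatrix_apply, ← RingHom.map_det, hdet]
    exact Ideal.Quotient.eq_zero_iff_mem.mpr (Ideal.subset_span (Set.mem_singleton _))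
  have hne : (M.map ⇑(proj K)) k l ≠ 0 := by
    rw [Matrix.map_apply, Ne, Ideal.Quotient.eq_zero_iff_mem, Ideal.mem_span_singleton]
    rintro ⟨t, ht⟩
    rw [ht, _root_.map_mul, hv, zero_mul] at hp
    exact hp rfl
  exact rank_coker_generic (R4 K) (M.map ⇑(proj K)) hdet0 k l hne

theorem stmt5 (K : Type) [Field K] [IsAlgClosed K] [CharZero K] :
    IsDomain (R4 K) ∧
    ∀ (a b : K), a ^ 3 = -1 → b ^ 3 = -1 →
      ∀ (i j s : ℕ), ({i, j, s} : Finset ℕ) = {2, 3, 4} → i < j →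
        Module.rank (FractionRing (R4 K))
            (FractionRing (R4 K) ⊗[R4 K] coker K (phiM K a b i j s)) = 1 ∧
        Module.rank (FractionRing (R4 K))
            (FractionRing (R4 K) ⊗[R4 K] coker K (psiM K a b i j s)) = 1 := by
  haveI hdom : IsDomain (R4 K) := r4_domain K
  refine ⟨hdom, ?_⟩
  intro a b ha hb i j s hset hij
  have hCa : (C a : S K) ^ 3 = -1 := by rw [← map_pow, ha, map_neg, _root_.map_one]
  have hCb : (C b : S K) ^ 3 = -1 := by rw [← map_pow, hb, map_neg, _root_.map_one]
  have hmem : ∀ x : ℕ, x ∈ ({i, j, s} : Finset ℕ) ↔ x ∈ ({2, 3, 4} : Finset ℕ) := by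
    rw [hset]; intro x; rfl
  have hi := (hmem i).mp (by simp)
  have hj := (hmem j).mp (by simp)
  have hs := (hmem s).mp (by simp)
  have h2 := (hmem 2).mpr (by simp)
  have h3 := (hmem 3).mpr (by simp)
  have h4 := (hmem 4).mpr (by simp)
  simp only [Finset.mem_insert, Finset.mem_singleton] at hi hj hs h2 h3 h4
  have hcases : (i = 2 ∧ j = 3 ∧ s = 4) ∨ (i = 2 ∧ j = 4 ∧ s = 3) ∨
      (i = 3 ∧ j = 4 ∧ s = 2) := by omega
  have hf4 : f4 K = X 0 ^ 3 + X 1 ^ 3 + X 2 ^ 3 + X 3 ^ 3 := rfl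
  rcases hcases with ⟨hi', hj', hs'⟩ | ⟨hi', hj', hs'⟩ | ⟨hi', hj', hs'⟩ <;>
      subst hi' hj' hs'
  · constructor
    · refine rank_coker_aux K _ ?_ 0 0 ![1, 0, -1, 0] ?_ ?_
      · rw [show phiM K a b 2 3 4 = !![X 0 - C a * X 3, -(X 1^2 + C b * X 1 * X 2 + C b^2 * X 2^2);
            X 1 - C b * X 2, X 0^2 + C a * X 0 * X 3 + C a^2 * X 3^2] from rfl,
          Matrix.det_fin_two_of, hf4]
        linear_combination (-(X 3 : S K) ^ 3) * hCa + (-(X 2 : S K) ^ 3) * hCb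
      · rw [hf4]; simp; norm_num
      · rw [show phiM K a b 2 3 4 0 0 = X 0 - C a * X 3 from rfl]
        simp
    · refine rank_coker_aux K _ ?_ 1 1 ![1, 0, -1, 0] ?_ ?_
      · rw [show psiM K a b 2 3 4 = !![X 0^2 + C a * X 0 * X 3 + C a^2 * X 3^2,
            X 1^2 + C b * X 1 * X 2 + C b^2 * X 2^2;
            -(X 1 - C b * X 2), X 0 - C a * X 3] from rfl,
          Matrix.det_fin_two_of, hf4]
        linear_combination (-(X 3 : S K) ^ 3) * hCa + (-(X 2 : S K) ^ 3) * hCb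
      · rw [hf4]; simp; norm_num
      · rw [show psiM K a b 2 3 4 1 1 = X 0 - C a * X 3 from rfl]
        simp
  · constructor
    · refine rank_coker_aux K _ ?_ 0 0 ![1, 0, 0, -1] ?_ ?_
      · rw [show phiM K a b 2 4 3 = !![X 0 - C a * X 2, -(X 1^2 + C b * X 1 * X 3 + C b^2 * X 3^2);
            X 1 - C b * X 3, X 0^2 + C a * X 0 * X 2 + C a^2 * X 2^2] from rfl,
          Matrix.det_fin_two_of, hf4]
        linear_combination (-(X 2 : S K) ^ 3) * hCa + (-(X 3 : S K) ^ 3) * hCb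
      · rw [hf4]; simp; norm_num
      · rw [show phiM K a b 2 4 3 0 0 = X 0 - C a * X 2 from rfl]
        simp
    · refine rank_coker_aux K _ ?_ 1 1 ![1, 0, 0, -1] ?_ ?_
      · rw [show psiM K a b 2 4 3 = !![X 0^2 + C a * X 0 * X 2 + C a^2 * X 2^2,
            X 1^2 + C b * X 1 * X 3 + C b^2 * X 3^2;
            -(X 1 - C b * X 3), X 0 - C a * X 2] from rfl,
          Matrix.det_fin_two_of, hf4]
        linear_combination (-(X 2 : S K) ^ 3) * hCa + (-(X 3 : S K) ^ 3) * hCb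
      · rw [hf4]; simp; norm_num
      · rw [show psiM K a b 2 4 3 1 1 = X 0 - C a * X 2 from rfl]
        simp
  · constructor
    · refine rank_coker_aux K _ ?_ 0 0 ![1, 0, 0, -1] ?_ ?_
      · rw [show phiM K a b 3 4 2 = !![X 0 - C a * X 1, -(X 2^2 + C b * X 2 * X 3 + C b^2 * X 3^2);
            X 2 - C b * X 3, X 0^2 + C a * X 0 * X 1 + C a^2 * X 1^2] from rfl,
          Matrix.det_fin_two_of, hf4]
        linear_combination (-(X 1 : S K) ^ 3) * hCa + (-(X 3 : S K) ^ 3) * hCb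
      · rw [hf4]; simp; norm_num
      · rw [show phiM K a b 3 4 2 0 0 = X 0 - C a * X 1 from rfl]
        simp
    · refine rank_coker_aux K _ ?_ 1 1 ![1, 0, 0, -1] ?_ ?_
      · rw [show psiM K a b 3 4 2 = !![X 0^2 + C a * X 0 * X 1 + C a^2 * X 1^2,
            X 2^2 + C b * X 2 * X 3 + C b^2 * X 3^2;
            -(X 2 - C b * X 3), X 0 - C a * X 1] from rfl,
          Matrix.det_fin_two_of, hf4]
        linear_combination (-(X 1 : S K) ^ 3) * hCa + (-(X 3 : S K) ^ 3) * hCb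
      · rw [hf4]; simp; norm_num
      · rw [show psiM K a b 3 4 2 1 1 = X 0 - C a * X 1 from rfl]
        simp
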